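/- Let |ψ⟩ be a unit vector in a Hilbert space, let V = {b_{i_m} ⋯ b_{i_1}|ψ⟩ : m ≤ k, each i_j ∈ {1,…,N}} for a family of N operators b₁,…,b_N, and let Π be the orthogonal projection onto span(V). Then for all m ≤ 2k+1 and all index sequences, ⟨ψ| b_{j_m} Π b_{j_{m-1}} Π ⋯ Π b_{j_1} |ψ⟩ = ⟨ψ| b_{j_m} b_{j_{m-1}} ⋯ b_{j_1} |ψ⟩. -/

import Mathlib

/-- `altApply P [aₘ, …, a₁] v = aₘ (P (aₘ₋₁ (P ( ⋯ (P (a₁ v)) ⋯ ))))`: the operators in the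
list are applied from right to left, with `P` inserted between consecutive operators. -/
def altApply {E : Type*} [AddCommGroup E] [Module ℂ E]
    (P : E →ₗ[ℂ] E) : List (E →ₗ[ℂ] E) → E → E
  | [], v => v
  | [a], v => a v
  | a :: rest, v => a (P (altApply P rest v))

/-- Plain right-to-left application of a list of operators. -/
def plainApply {E : Type*} [AddCommGroup E] [Module ℂ E] :
    List (E →ₗ[ℂ] E) → E → E
  | [], v => v
  | a :: rest, v => a (plainApply rest v)

/-- Like `altApply` but with `P` also inserted after the last (rightmost) operator. -/
def interApply {E : Type*} [AddCommGroup E] [Module ℂ E]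
    (P : E →ₗ[ℂ] E) : List (E →ₗ[ℂ] E) → E → E
  | [], v => v
  | a :: rest, v => a (P (interApply P rest v))

lemma altApply_cons {E : Type*} [AddCommGroup E] [Module ℂ E]
    (P a : E →ₗ[ℂ] E) (rest : List (E →ₗ[ℂ] E)) (h : rest ≠ []) (v : E) :
    altApply P (a :: rest) v = a (P (altApply P rest v)) := by
  cases rest with
  | nil => exact absurd rfl h
  | cons c r => rfl

lemma altApply_id {E : Type*} [AddCommGroup E] [Module ℂ E]
    (L : List (E →ₗ[ℂ] E)) (v : E) :
    altApply LinearMap.id L v = plainApply L v := by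
  induction L with
  | nil => rfl
  | cons a rest ih =>
    cases rest with
    | nil => rfl
    | cons c r =>
      rw [altApply_cons _ _ _ (by simp), ih]
      rfl

lemma altApply_append {E : Type*} [AddCommGroup E] [Module ℂ E]
    (P : E →ₗ[ℂ] E) (L₁ L₂ : List (E →ₗ[ℂ] E)) (h : L₂ ≠ []) (v : E) :
    altApply P (L₁ ++ L₂) v = interApply P L₁ (altApply P L₂ v) := by
  induction L₁ with
  | nil => rfl
  | cons a r ih =>
    rw [List.cons_append,
      altApply_cons _ _ _ (fun hc => h (List.append_eq_nil_iff.mp hc).2), ih]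
    rfl

lemma plainApply_append {E : Type*} [AddCommGroup E] [Module ℂ E]
    (L₁ L₂ : List (E →ₗ[ℂ] E)) (v : E) :
    plainApply (L₁ ++ L₂) v = plainApply L₁ (plainApply L₂ v) := by
  induction L₁ with
  | nil => rfl
  | cons a r ih => rw [List.cons_append]; show _ = _; simp only [plainApply, ih]

/-- With `Π` the orthogonal projection onto the span of all products of at most
`k` of the operators `b_i` (a family closed under adjoints) applied to a unit vector `ψ`,
interleaving `Π` does not change expectation values of products of length at most `2k+1`. -/
theorem stmt9 {nn : ℕ} {N k : ℕ}
    (b : Fin N → EuclideanSpace ℂ (Fin nn) →ₗ[ℂ] EuclideanSpace ℂ (Fin nn))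
    (hadj : ∀ i, ∃ j, LinearMap.adjoint (b i) = b j)
    (ψ : EuclideanSpace ℂ (Fin nn)) (hψ : ‖ψ‖ = 1)
    (Pr : EuclideanSpace ℂ (Fin nn) →ₗ[ℂ] EuclideanSpace ℂ (Fin nn))
    (hidem : Pr ∘ₗ Pr = Pr) (hsa : LinearMap.adjoint Pr = Pr)
    (hrange : LinearMap.range Pr = Submodule.span ℂ
      {w | ∃ m : ℕ, m ≤ k ∧ ∃ js : Fin m → Fin N,
        w = altApply LinearMap.id (List.ofFn fun i => b (js i)) ψ}) :
    ∀ m : ℕ, m ≤ 2 * k + 1 → ∀ js : Fin m → Fin N,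
      (inner ℂ ψ (altApply Pr (List.ofFn fun i => b (js i)) ψ) : ℂ)
        = inner ℂ ψ (altApply LinearMap.id (List.ofFn fun i => b (js i)) ψ) := by
  -- Pr fixes its range
  have hfix : ∀ x, x ∈ LinearMap.range Pr → Pr x = x := by
    rintro x ⟨y, rfl⟩
    exact LinearMap.congr_fun hidem y
  -- products of at most k family operators applied to ψ lie in the range of Pr
  have hmem : ∀ L : List (EuclideanSpace ℂ (Fin nn) →ₗ[ℂ] EuclideanSpace ℂ (Fin nn)), (∀ a ∈ L, ∃ i, a = b i) → L.length ≤ k →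
      plainApply L ψ ∈ LinearMap.range Pr := by
    intro L hL hlen
    rw [hrange]
    apply Submodule.subset_span
    refine ⟨L.length, hlen, fun i => (hL (L.get i) (List.get_mem L i)).choose, ?_⟩
    have h1 : (List.ofFn fun i => b ((hL (L.get i) (List.get_mem L i)).choose)) = L := by
      conv_rhs => rw [← List.ofFn_get L]
      congr 1
      funext i
      exact ((hL (L.get i) (List.get_mem L i)).choose_spec).symm
    rw [h1, altApply_id]
  -- "Good j φ": Pr fixes products of at most j family operators applied to φ
  have hGdψ : ∀ L : List (EuclideanSpace ℂ (Fin nn) →ₗ[ℂ] EuclideanSpace ℂ (Fin nn)), (∀ a ∈ L, ∃ i, a = b i) → L.length ≤ k →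
      Pr (plainApply L ψ) = plainApply L ψ :=
    fun L h1 h2 => hfix _ (hmem L h1 h2)
  have hGd_step : ∀ (j : ℕ) (φ : EuclideanSpace ℂ (Fin nn)) (i : Fin N),
      (∀ L : List (EuclideanSpace ℂ (Fin nn) →ₗ[ℂ] EuclideanSpace ℂ (Fin nn)), (∀ a ∈ L, ∃ i, a = b i) → L.length ≤ j + 1 →
        Pr (plainApply L φ) = plainApply L φ) →
      (∀ L : List (EuclideanSpace ℂ (Fin nn) →ₗ[ℂ] EuclideanSpace ℂ (Fin nn)), (∀ a ∈ L, ∃ i, a = b i) → L.length ≤ j →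
        Pr (plainApply L (b i φ)) = plainApply L (b i φ)) := by
    intro j φ i h L hL hlen
    have h2 := h (L ++ [b i])
      (by
        intro a ha
        rcases List.mem_append.mp ha with h' | h'
        · exact hL a h'
        · simp only [List.mem_singleton] at h'
          exact ⟨i, h'⟩)
      (by simp; omega)
    rwa [plainApply_append] at h2
  -- remove the interleaved Pr's from products of length ≤ j+1 applied to a "good" vector
  have hC : ∀ L : List (EuclideanSpace ℂ (Fin nn) →ₗ[ℂ] EuclideanSpace ℂ (Fin nn)), (∀ a ∈ L, ∃ i, a = b i) → ∀ (j : ℕ) (φ : EuclideanSpace ℂ (Fin nn)),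
      L.length ≤ j + 1 →
      (∀ L' : List (EuclideanSpace ℂ (Fin nn) →ₗ[ℂ] EuclideanSpace ℂ (Fin nn)), (∀ a ∈ L', ∃ i, a = b i) → L'.length ≤ j →
        Pr (plainApply L' φ) = plainApply L' φ) →
      altApply Pr L φ = plainApply L φ := by
    intro L
    induction L with
    | nil => intro _ j φ _ _; rfl
    | cons a rest ih =>
      intro hfam j φ hlen hGd
      cases rest with
      | nil => rfl
      | cons c r =>
        rw [altApply_cons _ _ _ (by simp),
          ih (fun x hx => hfam x (List.mem_cons_of_mem _ hx)) j φ
            (by simp at hlen ⊢; omega) hGd,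
          hGd (c :: r) (fun x hx => hfam x (List.mem_cons_of_mem _ hx))
            (by simp at hlen ⊢; omega)]
        rfl
  -- move the Pr's on the left across to the bra side
  have hE : ∀ L : List (EuclideanSpace ℂ (Fin nn) →ₗ[ℂ] EuclideanSpace ℂ (Fin nn)), (∀ a ∈ L, ∃ i, a = b i) → ∀ (j : ℕ) (φ : EuclideanSpace ℂ (Fin nn)),
      L.length ≤ j →
      (∀ L' : List (EuclideanSpace ℂ (Fin nn) →ₗ[ℂ] EuclideanSpace ℂ (Fin nn)), (∀ a ∈ L', ∃ i, a = b i) → L'.length ≤ j →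
        Pr (plainApply L' φ) = plainApply L' φ) →
      ∀ w : EuclideanSpace ℂ (Fin nn), (inner ℂ φ (interApply Pr L w) : ℂ) = inner ℂ φ (plainApply L w) := by
    intro L
    induction L with
    | nil => intro _ j φ _ _ w; rfl
    | cons a r ih =>
      intro hfam j φ hlen hGd w
      obtain ⟨i, hi⟩ := hfam a (List.mem_cons_self)
      obtain ⟨i', hi'⟩ := hadj i
      cases j with
      | zero => simp at hlen
      | succ jj =>
        have hφ' : Pr (b i' φ) = b i' φ := by
          have := hGd [b i'] (by intro x hx; simp at hx; exact ⟨i', hx⟩) (by simp)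
          simpa [plainApply] using this
        have hadj_a : LinearMap.adjoint a = b i' := by rw [hi, hi']
        calc (inner ℂ φ (interApply Pr (a :: r) w) : ℂ)
            = inner ℂ φ (a (Pr (interApply Pr r w))) := rfl
          _ = inner ℂ (LinearMap.adjoint a φ) (Pr (interApply Pr r w)) :=
              (LinearMap.adjoint_inner_left a _ φ).symm
          _ = inner ℂ (b i' φ) (Pr (interApply Pr r w)) := by rw [hadj_a]
          _ = inner ℂ ((LinearMap.adjoint Pr) (b i' φ)) (interApply Pr r w) :=
              (LinearMap.adjoint_inner_left Pr _ _).symm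
          _ = inner ℂ (b i' φ) (interApply Pr r w) := by rw [hsa, hφ']
          _ = inner ℂ (b i' φ) (plainApply r w) := by
              exact ih (fun x hx => hfam x (List.mem_cons_of_mem _ hx)) jj (b i' φ)
                (by simp at hlen ⊢; omega)
                (hGd_step jj φ i' (fun L' h1 h2 => hGd L' h1 (by omega))) w
          _ = inner ℂ (LinearMap.adjoint a φ) (plainApply r w) := by rw [hadj_a]
          _ = inner ℂ φ (a (plainApply r w)) := LinearMap.adjoint_inner_left a _ φ
          _ = inner ℂ φ (plainApply (a :: r) w) := rfl
  -- main list-level statement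
  have H : ∀ L : List (EuclideanSpace ℂ (Fin nn) →ₗ[ℂ] EuclideanSpace ℂ (Fin nn)), (∀ a ∈ L, ∃ i, a = b i) → L.length ≤ 2 * k + 1 →
      (inner ℂ ψ (altApply Pr L ψ) : ℂ) = inner ℂ ψ (plainApply L ψ) := by
    intro L hfam hlen
    by_cases h : L.length ≤ k + 1
    · rw [hC L hfam k ψ h hGdψ]
    · push_neg at h
      set n := L.length - (k + 1) with hn
      have hL2len : (L.drop n).length = k + 1 := by simp [hn]; omega
      have hL2ne : L.drop n ≠ [] := by
        intro hcon; rw [hcon] at hL2len; simp at hL2len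
      have hsplit := altApply_append Pr (L.take n) (L.drop n) hL2ne ψ
      rw [List.take_append_drop] at hsplit
      have hfam1 : ∀ a ∈ L.take n, ∃ i, a = b i :=
        fun a ha => hfam a (List.take_subset n L ha)
      have hfam2 : ∀ a ∈ L.drop n, ∃ i, a = b i :=
        fun a ha => hfam a (List.drop_subset n L ha)
      rw [hsplit, hC (L.drop n) hfam2 k ψ (by omega) hGdψ,
        hE (L.take n) hfam1 k ψ (by simp [hn]; omega) hGdψ (plainApply (L.drop n) ψ),
        ← plainApply_append, List.take_append_drop]
  intro m hm js
  rw [altApply_id]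
  refine H _ ?_ ?_
  swap
  · simpa using hm
  intro a ha
  rw [List.mem_ofFn] at ha
  obtain ⟨i, hi⟩ := ha
  exact ⟨js i, hi.symm⟩
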